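/- Let φ : ℝ^{n−1} → ℝ be continuous with φ(0) = 0, let Ω = { (x₁, x₂) : x₂ ≥ φ(x₁) } be its epigraph, Ω_h = Ω + {h·e} with e = (0,1), and let B_h = { (x₁, x₂) : ∃ y₁ ∈ ℝ^{n−1}, x₂ ≥ φ(x₁ − h y₁) + h φ(y₁) + h }. Then there exists h₀ > 0 such that B_h = Ω_h for all h ∈ (0, h₀) if and only if φ is convex and positively homogeneous of degree 1 (i.e., Ω is a convex cone). In that case B_h = Ω_h for all h ≥ 0. -/

import Mathlib

/-- with `φ : ℝ^{n-1} → ℝ` continuous, `φ(0)=0`, `Ω_h` the translated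
epigraph and `B_h` the domain of the inf-convolution, there exists `h₀ > 0` with
`B_h = Ω_h` for all `h ∈ (0,h₀)` iff `φ` is convex and positively 1-homogeneous
(i.e. `Ω` is a convex cone), and in that case `B_h = Ω_h` for all `h ≥ 0`. -/
theorem cone_support (m : ℕ) (φ : EuclideanSpace ℝ (Fin m) → ℝ)
    (hφ_cont : Continuous φ) (hφ0 : φ 0 = 0) :
    ((∃ h₀ > (0 : ℝ), ∀ h : ℝ, 0 < h → h < h₀ →
        {p : EuclideanSpace ℝ (Fin m) × ℝ |
            ∃ y : EuclideanSpace ℝ (Fin m), φ (p.1 - h • y) + h * φ y + h ≤ p.2}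
          = {p : EuclideanSpace ℝ (Fin m) × ℝ | φ p.1 + h ≤ p.2})
      ↔ (ConvexOn ℝ Set.univ φ ∧ ∀ t : ℝ, 0 < t → ∀ x, φ (t • x) = t * φ x))
    ∧ ((ConvexOn ℝ Set.univ φ ∧ ∀ t : ℝ, 0 < t → ∀ x, φ (t • x) = t * φ x) →
        ∀ h : ℝ, 0 ≤ h →
          {p : EuclideanSpace ℝ (Fin m) × ℝ |
              ∃ y : EuclideanSpace ℝ (Fin m), φ (p.1 - h • y) + h * φ y + h ≤ p.2}
            = {p : EuclideanSpace ℝ (Fin m) × ℝ | φ p.1 + h ≤ p.2}) := by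
  -- Part 2 : convexity + homogeneity implies the set equality for all h ≥ 0
  have part2 : (ConvexOn ℝ Set.univ φ ∧ ∀ t : ℝ, 0 < t → ∀ x, φ (t • x) = t * φ x) →
      ∀ h : ℝ, 0 ≤ h →
        {p : EuclideanSpace ℝ (Fin m) × ℝ |
            ∃ y : EuclideanSpace ℝ (Fin m), φ (p.1 - h • y) + h * φ y + h ≤ p.2}
          = {p : EuclideanSpace ℝ (Fin m) × ℝ | φ p.1 + h ≤ p.2} := by
    rintro ⟨hc, hh⟩ h hh0
    have subadd : ∀ a b, φ (a + b) ≤ φ a + φ b := by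
      intro a b
      have hcv := hc.2 (Set.mem_univ a) (Set.mem_univ b)
        (by norm_num : (0:ℝ) ≤ 1/2) (by norm_num : (0:ℝ) ≤ 1/2) (by norm_num)
      have hhom := hh 2 (by norm_num) ((1/2:ℝ) • a + (1/2:ℝ) • b)
      have h2 : (2:ℝ) • ((1/2:ℝ) • a + (1/2:ℝ) • b) = a + b := by
        rw [smul_add, smul_smul, smul_smul]; norm_num
      rw [h2] at hhom
      simp only [smul_eq_mul] at hcv
      linarith
    ext p
    simp only [Set.mem_setOf_eq]
    constructor
    · rintro ⟨y, hy⟩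
      rcases eq_or_lt_of_le hh0 with h0 | h0
      · rw [← h0] at hy ⊢
        simpa using hy
      · have key : φ p.1 ≤ φ (p.1 - h • y) + h * φ y := by
          have hs := subadd (p.1 - h • y) (h • y)
          rw [sub_add_cancel] at hs
          have := hh h h0 y
          linarith
        linarith
    · intro hp
      exact ⟨0, by simpa [hφ0] using hp⟩
  refine ⟨⟨?_, fun hcone => ⟨1, one_pos, fun h h0 _ => part2 hcone h h0.le⟩⟩, part2⟩
  rintro ⟨h₀, h₀pos, hB⟩
  -- Key inequality for small h
  have P0 : ∀ h : ℝ, 0 < h → h < h₀ → ∀ x y, φ x ≤ φ (x - h • y) + h * φ y := by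
    intro h h1 h2 x y
    have hset := Set.ext_iff.mp (hB h h1 h2) (x, φ (x - h • y) + h * φ y + h)
    have hx := hset.mp ⟨y, le_rfl⟩
    simp only [Set.mem_setOf_eq] at hx
    linarith
  -- Iterate to get the inequality for (n+1) * h
  have Pn : ∀ n : ℕ, ∀ h : ℝ, 0 < h → h < h₀ → ∀ x y,
      φ x ≤ φ (x - (((n : ℝ) + 1) * h) • y) + (((n : ℝ) + 1) * h) * φ y := by
    intro n
    induction n with
    | zero => intro h h1 h2 x y; simpa using P0 h h1 h2 x y
    | succ n ih =>
      intro h h1 h2 x y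
      have h1' := P0 h h1 h2 x y
      have h2' := ih h h1 h2 (x - h • y) y
      have hveq : x - h • y - (((n : ℝ) + 1) * h) • y
          = x - (((n : ℝ) + 1 + 1) * h) • y := by
        rw [sub_sub, ← add_smul]; ring_nf
      rw [hveq] at h2'
      push_cast
      nlinarith
  -- The inequality for all h > 0
  have Pall : ∀ h : ℝ, 0 < h → ∀ x y, φ x ≤ φ (x - h • y) + h * φ y := by
    intro h h1 x y
    obtain ⟨n, hn⟩ := exists_nat_gt (h / h₀)
    have hn1 : h / h₀ < (n : ℝ) + 1 := lt_of_lt_of_le hn (by linarith)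
    have hnpos : (0:ℝ) < (n : ℝ) + 1 := by positivity
    set δ := h / ((n : ℝ) + 1) with hδ
    have hδpos : 0 < δ := by positivity
    have hδlt : δ < h₀ := by
      rw [hδ, div_lt_iff₀ hnpos]
      rw [div_lt_iff₀ h₀pos] at hn1
      linarith [hn1]
    have heq : ((n : ℝ) + 1) * δ = h := by
      rw [hδ, mul_div_assoc', mul_comm, mul_div_assoc, div_self hnpos.ne', mul_one]
    have := Pn n δ hδpos hδlt x y
    rwa [heq] at this
  -- Positive homogeneity
  have hom : ∀ t : ℝ, 0 < t → ∀ x, φ (t • x) = t * φ x := by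
    intro t ht x
    have hle : φ (t • x) ≤ t * φ x := by
      have := Pall t ht (t • x) x
      simpa [hφ0] using this
    have hge : t * φ x ≤ φ (t • x) := by
      have h1 := Pall (1/t) (by positivity) x (t • x)
      have hv : x - (1/t) • t • x = 0 := by
        rw [smul_smul, one_div, inv_mul_cancel₀ ht.ne', one_smul, sub_self]
      rw [hv, hφ0] at h1
      have := mul_le_mul_of_nonneg_left h1 ht.le
      calc t * φ x ≤ t * (0 + 1/t * φ (t • x)) := this
        _ = φ (t • x) := by field_simp; ring
    linarith
  -- Subadditivity
  have subadd : ∀ a b, φ (a + b) ≤ φ a + φ b := by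
    intro a b
    have := Pall 1 one_pos (a + b) b
    simpa using this
  refine ⟨⟨convex_univ, ?_⟩, hom⟩
  intro x _ y _ a b ha hb hab
  rcases eq_or_lt_of_le ha with ha0 | ha0
  · have hb1 : b = 1 := by linarith
    simp [← ha0, hb1]
  rcases eq_or_lt_of_le hb with hb0 | hb0
  · have ha1 : a = 1 := by linarith
    simp [← hb0, ha1]
  calc φ (a • x + b • y) ≤ φ (a • x) + φ (b • y) := subadd _ _
    _ = a * φ x + b * φ y := by rw [hom a ha0 x, hom b hb0 y]
    _ = a • φ x + b • φ y := by simp [smul_eq_mul]
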